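/- Let α > 0, r > 0, δ ∈ ℝ, and let m be a positive integer with m ≥ (14|δ+1−r|/(α r))^{1/r}. Then there exists Θ with |Θ| ≤ 14/13 such that ∫_m^∞ e^{-α t^r} t^δ dt = (e^{-α m^r}/(α r)) · m^{δ+1-r} · (1 + Θ · |δ+1−r|/(α r) · 1/m^r). -/

import Mathlib

open MeasureTheory Filter Set

private lemma tail_tendsto (α r s : ℝ) (hα : 0 < α) (hr : 0 < r) :
    Tendsto (fun t : ℝ => Real.exp (-α * t ^ r) * t ^ s) atTop (nhds 0) := by
  have h2 := (tendsto_rpow_mul_exp_neg_mul_atTop_nhds_zero (s / r) α hα).comp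
    (tendsto_rpow_atTop hr)
  refine h2.congr' ?_
  filter_upwards [eventually_gt_atTop (0 : ℝ)] with t ht
  show (t ^ r) ^ (s / r) * Real.exp (-α * t ^ r) = _
  rw [← Real.rpow_mul ht.le, mul_comm r, div_mul_cancel₀ s hr.ne', mul_comm]

private lemma tail_cont (α r s : ℝ) {m : ℝ} (hm : 0 < m) :
    ContinuousOn (fun t : ℝ => Real.exp (-α * t ^ r) * t ^ s) (Set.Ici m) := by
  intro t ht
  have ht0 : (0:ℝ) < t := lt_of_lt_of_le hm ht
  apply ContinuousAt.continuousWithinAt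
  have h1 : ContinuousAt (fun t : ℝ => t ^ r) t :=
    Real.continuousAt_rpow_const t r (Or.inl ht0.ne')
  have h2 : ContinuousAt (fun t : ℝ => t ^ s) t :=
    Real.continuousAt_rpow_const t s (Or.inl ht0.ne')
  exact ((Real.continuous_exp.continuousAt).comp (h1.const_mul (-α))).mul h2

private lemma tail_integrable (α r s : ℝ) (hα : 0 < α) (hr : 0 < r) {m : ℝ} (hm : 0 < m) :
    IntegrableOn (fun t : ℝ => Real.exp (-α * t ^ r) * t ^ s) (Set.Ioi m) := by
  obtain ⟨M, hM⟩ := eventually_atTop.1 <|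
    (tail_tendsto α r (s + 2) hα hr).eventually (eventually_le_nhds (by norm_num : (0:ℝ) < 1))
  obtain ⟨C, hC⟩ := (isCompact_Icc (a := m) (b := max m M)).exists_bound_of_continuousOn
    ((tail_cont α r (s + 2) hm).mono (fun x hx => hx.1))
  set C' : ℝ := max C 1 with hC'
  have hbound : ∀ t ∈ Set.Ioi m, Real.exp (-α * t ^ r) * t ^ (s + 2) ≤ C' := by
    intro t ht
    rcases le_or_gt t (max m M) with h | h
    · exact le_trans (le_trans (le_abs_self _) (hC t ⟨le_of_lt ht, h⟩)) (le_max_left _ _)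
    · exact le_trans (hM t (le_of_lt (lt_of_le_of_lt (le_max_right m M) h))) (le_max_right _ _)
  have hint : IntegrableOn (fun t : ℝ => C' * t ^ (-2 : ℝ)) (Set.Ioi m) :=
    (integrableOn_Ioi_rpow_of_lt (by norm_num) hm).const_mul C'
  refine Integrable.mono' hint
    (((tail_cont α r s hm).mono Ioi_subset_Ici_self).aestronglyMeasurable measurableSet_Ioi) ?_
  rw [ae_restrict_iff' measurableSet_Ioi]
  filter_upwards with t ht
  have ht0 : (0:ℝ) < t := lt_trans hm ht
  have h1 : t ^ s = t ^ (s + 2) * t ^ (-2 : ℝ) := by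
    rw [← Real.rpow_add ht0]; norm_num
  have hnn : 0 ≤ Real.exp (-α * t ^ r) * t ^ s :=
    mul_nonneg (Real.exp_nonneg _) (Real.rpow_nonneg ht0.le _)
  rw [Real.norm_eq_abs, abs_of_nonneg hnn, h1, ← mul_assoc]
  exact mul_le_mul_of_nonneg_right (hbound t ht) (Real.rpow_nonneg ht0.le _)
theorem tail_integral_asymptotics (α r δ : ℝ) (hα : 0 < α) (hr : 0 < r)
    (m : ℕ) (hm : 1 ≤ m)
    (hcond : ((14 * |δ + 1 - r| / (α * r)) ^ (1 / r) : ℝ) ≤ (m : ℝ)) :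
    ∃ Θ : ℝ, |Θ| ≤ 14 / 13 ∧
      ∫ t in Set.Ici (m : ℝ), Real.exp (-α * t ^ r) * t ^ δ
        = Real.exp (-α * (m : ℝ) ^ r) / (α * r) * (m : ℝ) ^ (δ + 1 - r) *
          (1 + Θ * (|δ + 1 - r| / (α * r)) * (1 / (m : ℝ) ^ r)) := by
  have hm0 : (0:ℝ) < m := by exact_mod_cast hm
  rw [MeasureTheory.integral_Ici_eq_integral_Ioi]
  set c : ℝ := δ + 1 - r with hc
  have hαr : 0 < α * r := mul_pos hα hr
  have hmr : (0:ℝ) < (m:ℝ) ^ r := Real.rpow_pos_of_pos hm0 r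
  -- step A : the smallness condition
  have h14 : |c| / (α * r) * (1 / (m:ℝ) ^ r) ≤ 1 / 14 := by
    have h0 : (0:ℝ) ≤ 14 * |c| / (α * r) := by positivity
    have h1 : ((14 * |c| / (α * r)) ^ (1/r)) ^ r ≤ (m:ℝ) ^ r :=
      Real.rpow_le_rpow (Real.rpow_nonneg h0 _) hcond hr.le
    rw [← Real.rpow_mul h0, one_div_mul_cancel hr.ne', Real.rpow_one] at h1
    rw [div_mul_eq_mul_div, mul_one_div, div_div, div_le_div_iff₀ (by positivity) (by norm_num)]
    rw [div_le_iff₀ hαr] at h1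
    linarith
  set f1 : ℝ → ℝ := fun t => Real.exp (-α * t ^ r) * t ^ δ with hf1
  set f2 : ℝ → ℝ := fun t => Real.exp (-α * t ^ r) * t ^ (δ - r) with hf2
  have hint1 : MeasureTheory.IntegrableOn f1 (Set.Ioi (m:ℝ)) := tail_integrable α r δ hα hr hm0
  have hint2 : MeasureTheory.IntegrableOn f2 (Set.Ioi (m:ℝ)) :=
    tail_integrable α r (δ - r) hα hr hm0
  set F : ℝ → ℝ := fun t => -(Real.exp (-α * t ^ r) * t ^ c / (α * r)) with hF
  have hderiv : ∀ t ∈ Set.Ici (m:ℝ), HasDerivAt F (f1 t - c / (α * r) * f2 t) t := by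
    intro t ht
    have ht0 : (0:ℝ) < t := lt_of_lt_of_le hm0 ht
    have h1 : HasDerivAt (fun t : ℝ => t ^ r) (r * t ^ (r - 1)) t :=
      Real.hasDerivAt_rpow_const (Or.inl ht0.ne')
    have h3 : HasDerivAt (fun t : ℝ => Real.exp (-α * t ^ r))
        (Real.exp (-α * t ^ r) * (-α * (r * t ^ (r - 1)))) t := (h1.const_mul (-α)).exp
    have h4 : HasDerivAt (fun t : ℝ => t ^ c) (c * t ^ (c - 1)) t :=
      Real.hasDerivAt_rpow_const (Or.inl ht0.ne')
    have h6 := ((h3.mul h4).div_const (α * r)).neg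
    convert h6 using 1
    · rfl
    · rfl
    · rfl
    have e1 : t ^ δ = t ^ (r - 1) * t ^ c := by
      rw [← Real.rpow_add ht0]; congr 1; rw [hc]; ring
    have e2 : t ^ (δ - r) = t ^ (c - 1) := by
      congr 1; rw [hc]; ring
    simp only [hf1, hf2]
    rw [e1, e2]
    field_simp
    ring
  have hFt : Filter.Tendsto F Filter.atTop (nhds 0) := by
    have := ((tail_tendsto α r c hα hr).div_const (α * r)).neg
    simpa only [zero_div, neg_zero] using this
  have hintsub : MeasureTheory.IntegrableOn (fun t => f1 t - c / (α * r) * f2 t)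
      (Set.Ioi (m:ℝ)) := hint1.sub (hint2.const_mul _)
  have key := MeasureTheory.integral_Ioi_of_hasDerivAt_of_tendsto' hderiv hintsub hFt
  rw [MeasureTheory.integral_sub hint1 (hint2.const_mul _),
    MeasureTheory.integral_const_mul] at key
  set I : ℝ := ∫ t in Set.Ioi (m:ℝ), f1 t with hI
  set J : ℝ := ∫ t in Set.Ioi (m:ℝ), f2 t with hJ
  set E : ℝ := Real.exp (-α * (m:ℝ) ^ r) / (α * r) * (m:ℝ) ^ c with hE
  have hE0 : 0 < E := by
    rw [hE]
    exact mul_pos (div_pos (Real.exp_pos _) hαr) (Real.rpow_pos_of_pos hm0 c)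
  have hIE : I = E + c / (α * r) * J := by
    have h0 : 0 - F (m:ℝ) = E := by
      simp only [hF, hE]; ring
    rw [h0] at key; linarith
  have hJ0 : 0 ≤ J :=
    MeasureTheory.setIntegral_nonneg measurableSet_Ioi (fun t ht =>
      mul_nonneg (Real.exp_nonneg _) (Real.rpow_nonneg (le_of_lt (lt_trans hm0 ht)) _))
  have hI0 : 0 ≤ I :=
    MeasureTheory.setIntegral_nonneg measurableSet_Ioi (fun t ht =>
      mul_nonneg (Real.exp_nonneg _) (Real.rpow_nonneg (le_of_lt (lt_trans hm0 ht)) _))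
  have hJI : J ≤ 1 / (m:ℝ) ^ r * I := by
    have hmono : J ≤ ∫ t in Set.Ioi (m:ℝ), (1 / (m:ℝ) ^ r) * f1 t := by
      refine MeasureTheory.setIntegral_mono_on hint2 (hint1.const_mul _)
        measurableSet_Ioi ?_
      intro t ht
      have ht0 : (0:ℝ) < t := lt_trans hm0 ht
      have e3 : t ^ (δ - r) = t ^ δ * t ^ (-r) := by
        rw [← Real.rpow_add ht0, sub_eq_add_neg]
      have e4 : t ^ (-r) ≤ 1 / (m:ℝ) ^ r := by
        rw [one_div, ← Real.rpow_neg hm0.le]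
        exact Real.rpow_le_rpow_of_nonpos hm0 (le_of_lt ht) (neg_nonpos.2 hr.le)
      simp only [hf1, hf2]
      rw [e3, ← mul_assoc, mul_comm (1 / (m:ℝ) ^ r), mul_assoc, mul_assoc]
      refine mul_le_mul_of_nonneg_left ?_ (Real.exp_nonneg _)
      calc t ^ δ * t ^ (-r) ≤ t ^ δ * (1 / (m:ℝ) ^ r) :=
            mul_le_mul_of_nonneg_left e4 (Real.rpow_nonneg ht0.le _)
        _ = t ^ δ * (1 / (m:ℝ) ^ r) := rfl
    rwa [MeasureTheory.integral_const_mul] at hmono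
  have hI13 : I ≤ 14 / 13 * E := by
    have s1 : c / (α * r) * J ≤ |c| / (α * r) * J := by
      gcongr
      exact le_abs_self c
    have s2 : |c| / (α * r) * J ≤ |c| / (α * r) * (1 / (m:ℝ) ^ r * I) := by
      gcongr
    have s3 : |c| / (α * r) * (1 / (m:ℝ) ^ r * I) ≤ 1 / 14 * I := by
      rw [← mul_assoc]
      exact mul_le_mul_of_nonneg_right h14 hI0
    linarith
  by_cases hc0 : c = 0
  · refine ⟨0, by norm_num, ?_⟩
    rw [hIE, hc0]
    simp
  · refine ⟨c / |c| * (J * (m:ℝ) ^ r / E), ?_, ?_⟩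
    · have habs : |c / |c| * (J * (m:ℝ) ^ r / E)| = J * (m:ℝ) ^ r / E := by
        rw [abs_mul, abs_div, abs_abs, div_self (abs_ne_zero.2 hc0), one_mul,
          abs_of_nonneg (by positivity)]
      rw [habs, div_le_iff₀ hE0]
      calc J * (m:ℝ) ^ r ≤ 1 / (m:ℝ) ^ r * I * (m:ℝ) ^ r :=
            mul_le_mul_of_nonneg_right hJI hmr.le
        _ = I := by field_simp
        _ ≤ 14 / 13 * E := hI13
    · rw [hIE]
      have habs : c / |c| * |c| = c := div_mul_cancel₀ c (abs_ne_zero.2 hc0)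
      field_simp
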